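/- Let (A,+,·) be a left nilpotent pre-Lie ring of cardinality p^n for a prime p and a natural number n < p-1. Let (A,+,∘) be the group of flows of (A,+,·), and let • be the operation on A/ann(p^2) constructed from the brace (A,+,∘) via ⊙ and ξ. Then for all x, y ∈ A: [x]•[y] = (p−1)·[x·y] in A/ann(p^2), where [x·y] denotes the product in the factor pre-Lie ring (A/ann(p^2),+,·). -/

import Mathlib

universe u

/-- A left brace: `(A,+)` abelian group, `(A,∘)` a group, with
`a∘(b+c)+a = a∘b+a∘c`. -/
structure LeftBrace (A : Type u) [AddCommGroup A] where
  circ : A → A → A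
  one : A
  inv : A → A
  circ_assoc : ∀ a b c : A, circ (circ a b) c = circ a (circ b c)
  one_circ : ∀ a : A, circ one a = a
  circ_one : ∀ a : A, circ a one = a
  inv_circ : ∀ a : A, circ (inv a) a = one
  circ_add : ∀ a b c : A, circ a (b + c) + a = circ a b + circ a c

/-- `a*b = a∘b - a - b`. -/
def LeftBrace.star {A : Type u} [AddCommGroup A] (B : LeftBrace A) (a b : A) : A :=
  B.circ a b - a - b

/-- `ann(k) = {a : k•a = 0}`, as an additive subgroup. -/
def annSub (A : Type u) [AddCommGroup A] (k : ℕ) : AddSubgroup A where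
  carrier := {a : A | k • a = 0}
  zero_mem' := by simp
  add_mem' := by
    intro a b ha hb
    have ha' : k • a = 0 := ha
    have hb' : k • b = 0 := hb
    show k • (a + b) = 0
    rw [smul_add, ha', hb', add_zero]
  neg_mem' := by
    intro a ha
    have ha' : k • a = 0 := ha
    show k • (-a) = 0
    rw [smul_neg, ha', neg_zero]

/-- The coset `[a]` of `a` in `A/ann(k)`. -/
def qmk {A : Type u} [AddCommGroup A] (k : ℕ) (a : A) : A ⧸ annSub A k :=
  QuotientAddGroup.mk a

/-- Evaluation of a non-associative word under a binary operation `op`,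
substituting `f i` for the variable `i`. -/
def wEval {α : Type*} {β : Type*} (op : β → β → β) (f : α → β) : FreeMagma α → β
  | FreeMagma.of a => f a
  | FreeMagma.mul x y => op (wEval op f x) (wEval op f y)

/-- The list of leaves (occurrences of variables, left to right) of a word. -/
def wLeaves {α : Type*} : FreeMagma α → List α
  | FreeMagma.of a => [a]
  | FreeMagma.mul x y => wLeaves x ++ wLeaves y

/-- The last (rightmost) variable of a word. -/
def wLast {α : Type*} : FreeMagma α → α
  | FreeMagma.of a => a
  | FreeMagma.mul _ y => wLast y

/-- The number of occurrences of the variable `a` in a word. -/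
def wCount {α : Type*} [DecidableEq α] (a : α) : FreeMagma α → ℕ
  | FreeMagma.of b => if b = a then 1 else 0
  | FreeMagma.mul x y => wCount a x + wCount a y

/-- The length (number of variable occurrences) of a word. -/
def wLen {α : Type*} : FreeMagma α → ℕ
  | FreeMagma.of _ => 1
  | FreeMagma.mul x y => wLen x + wLen y

/-- Left-normed product `a₁·(a₂·(⋯(aₘ·b)⋯))`. -/
def leftProd {Q : Type*} (mul : Q → Q → Q) : List Q → Q → Q
  | [], b => b
  | a :: l, b => mul a (leftProd mul l b)

/-- `circPow B a k` is the product of `k` copies of `a` under `∘`. -/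
def circPow {A : Type u} [AddCommGroup A] (B : LeftBrace A) (a : A) : ℕ → A
  | 0 => B.one
  | k + 1 => B.circ a (circPow B a k)

/-- `eSeq B a (i-1)` is `a_i`, where `a_1 = a` and `a_{i+1} = a * a_i`. -/
def eSeq {A : Type u} [AddCommGroup A] (B : LeftBrace A) (a : A) : ℕ → A
  | 0 => a
  | i + 1 => B.star a (eSeq B a i)

/-- `starIter B a b (i-1)` is `e_i`, where `e_1 = a*b` and `e_{i+1} = a*e_i`. -/
def starIter {A : Type u} [AddCommGroup A] (B : LeftBrace A) (a b : A) : ℕ → A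
  | 0 => B.star a b
  | i + 1 => B.star a (starIter B a b i)

/-- `iterOp op u v i` is `u ⊙ (u ⊙ (⋯ (u ⊙ v)))` with `i` applications of `u ⊙ ·`. -/
def iterOp {Q : Type*} (op : Q → Q → Q) (u v : Q) : ℕ → Q
  | 0 => v
  | i + 1 => op u (iterOp op u v i)

/-- `f(a) = Σ_{i=1}^{p−1} (C(p−1,i−1)/i)·e_i` where `e_1 = a`, `e_{i+1} = a*e_i`. -/
def fMap {A : Type u} [AddCommGroup A] (B : LeftBrace A) (p : ℕ) (a : A) : A :=
  ∑ i ∈ Finset.Icc 1 (p - 1), (Nat.choose (p - 1) (i - 1) / i) • eSeq B a (i - 1)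

/-- `braceChainAux B (i-1)` is `A^i`: `A^1 = A`, `A^{i+1}` the additive subgroup
generated by `{x*y : x ∈ A, y ∈ A^i}`. -/
def braceChainAux {A : Type u} [AddCommGroup A] (B : LeftBrace A) : ℕ → AddSubgroup A
  | 0 => ⊤
  | i + 1 => AddSubgroup.closure {z : A | ∃ x : A, ∃ y ∈ braceChainAux B i, z = B.star x y}

/-- `dSeq B a b i = (d_i, d_i')`: `d_0 = a`, `d_0' = b`, `d_{i+1} = d_i + d_i'`,
`d_{i+1}' = d_i * d_i'`. -/
def dSeq {A : Type u} [AddCommGroup A] (B : LeftBrace A) (a b : A) : ℕ → A × A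
  | 0 => (a, b)
  | i + 1 => ((dSeq B a b i).1 + (dSeq B a b i).2, B.star (dSeq B a b i).1 (dSeq B a b i).2)

section Stmt11Aux

open Finset

variable {A : Type u} [AddCommGroup A]

/-- Left multiplication as an additive homomorphism. -/
def mulLH (mul : A → A → A) (hdistr : ∀ x y z : A, mul x (y + z) = mul x y + mul x z)
    (a : A) : A →+ A := AddMonoidHom.mk' (mul a) fun b c => hdistr a b c

@[simp] lemma mulLH_apply (mul : A → A → A) (hdistr : ∀ x y z : A, mul x (y + z) = mul x y + mul x z)
    (a b : A) : mulLH mul hdistr a b = mul a b := rfl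

/-- Right multiplication as an additive homomorphism. -/
def mulRH (mul : A → A → A) (hdistl : ∀ x y z : A, mul (x + y) z = mul x z + mul y z)
    (b : A) : A →+ A := AddMonoidHom.mk' (fun a => mul a b) fun a c => hdistl a c b

@[simp] lemma mulRH_apply (mul : A → A → A) (hdistl : ∀ x y z : A, mul (x + y) z = mul x z + mul y z)
    (a b : A) : mulRH mul hdistl b a = mul a b := rfl

/-- The `q`-fold scalar multiple map as an additive homomorphism. -/
def nsmulH (q : ℕ) : A →+ A := AddMonoidHom.mk' (fun a : A => q • a) fun a b => smul_add q a b

@[simp] lemma nsmulH_apply (q : ℕ) (a : A) : (nsmulH q : A →+ A) a = q • a := rfl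

section MulFacts

variable {mul : A → A → A}

lemma my_mul_zero_r (hdistr : ∀ x y z : A, mul x (y + z) = mul x y + mul x z) (a : A) :
    mul a 0 = 0 := map_zero (mulLH mul hdistr a)

lemma my_mul_zero_l (hdistl : ∀ x y z : A, mul (x + y) z = mul x z + mul y z) (b : A) :
    mul 0 b = 0 := map_zero (mulRH mul hdistl b)

lemma my_mul_nsmul_r (hdistr : ∀ x y z : A, mul x (y + z) = mul x y + mul x z)
    (a : A) (k : ℕ) (b : A) : mul a (k • b) = k • mul a b := map_nsmul (mulLH mul hdistr a) k b

lemma my_mul_nsmul_l (hdistl : ∀ x y z : A, mul (x + y) z = mul x z + mul y z)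
    (a : A) (k : ℕ) (b : A) : mul (k • a) b = k • mul a b := map_nsmul (mulRH mul hdistl b) k a

lemma my_mul_sum_r (hdistr : ∀ x y z : A, mul x (y + z) = mul x y + mul x z)
    (a : A) {ι : Type} (s : Finset ι) (f : ι → A) :
    mul a (∑ i ∈ s, f i) = ∑ i ∈ s, mul a (f i) := map_sum (mulLH mul hdistr a) f s

lemma my_mul_sum_l (hdistl : ∀ x y z : A, mul (x + y) z = mul x z + mul y z)
    (b : A) {ι : Type} (s : Finset ι) (f : ι → A) :
    mul (∑ i ∈ s, f i) b = ∑ i ∈ s, mul (f i) b := map_sum (mulRH mul hdistl b) f s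

end MulFacts

/-- Degree-`D` coefficient of iterated left multiplications determined by the
coefficient families `h` (for the left factors) and `b` (for the rightmost factor). -/
def Gen (mul : A → A → A) (h b : ℕ → A) : ℕ → ℕ → A
  | 0, D => b D
  | k + 1, D => ∑ e ∈ Finset.Icc 1 D, mul (h e) (Gen mul h b k (D - e))

@[simp] lemma Gen_zero_fst (mul : A → A → A) (h b : ℕ → A) (D : ℕ) :
    Gen mul h b 0 D = b D := rfl

lemma Gen_succ_fst (mul : A → A → A) (h b : ℕ → A) (k D : ℕ) :
    Gen mul h b (k + 1) D = ∑ e ∈ Finset.Icc 1 D, mul (h e) (Gen mul h b k (D - e)) := rfl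

lemma Gen_pos_snd_zero (mul : A → A → A) (h b : ℕ → A) (k : ℕ) (hk : 1 ≤ k) :
    Gen mul h b k 0 = 0 := by
  obtain ⟨k', rfl⟩ := Nat.exists_eq_add_of_le hk
  rw [add_comm, Gen_succ_fst, Finset.Icc_eq_empty (by omega), Finset.sum_empty]

lemma Gen_snd_zero (mul : A → A → A) (h b : ℕ → A) (hb : b 0 = 0) (k : ℕ) :
    Gen mul h b k 0 = 0 := by
  cases k with
  | zero => exact hb
  | succ k => exact Gen_pos_snd_zero mul h b (k + 1) (by omega)

lemma Gen_small {mul : A → A → A} (hdistr : ∀ x y z : A, mul x (y + z) = mul x y + mul x z)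
    (h : ℕ → A) (hh : h 0 = 0) :
    ∀ j D, D ≤ j → Gen mul h h j D = 0 := by
  intro j
  induction j with
  | zero => intro D hD; interval_cases D; exact hh
  | succ j ih =>
    intro D hD
    rw [Gen_succ_fst]
    refine Finset.sum_eq_zero fun e he => ?_
    rw [Finset.mem_Icc] at he
    rw [ih (D - e) (by omega), my_mul_zero_r hdistr]

lemma Gen_congr {mul : A → A → A} (hdistr : ∀ x y z : A, mul x (y + z) = mul x y + mul x z)
    (h₁ h₂ b₁ b₂ : ℕ → A) (hb₁ : b₁ 0 = 0) (hb₂ : b₂ 0 = 0) :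
    ∀ j D, (∀ i, i < D → h₁ i = h₂ i) → (∀ i, i < D → b₁ i = b₂ i) →
      Gen mul h₁ b₁ (j + 1) D = Gen mul h₂ b₂ (j + 1) D := by
  intro j
  induction j with
  | zero =>
    intro D hh hb
    rw [Gen_succ_fst, Gen_succ_fst]
    refine Finset.sum_congr rfl fun e he => ?_
    rw [Finset.mem_Icc] at he
    rcases eq_or_lt_of_le he.2 with heq | hlt
    · subst heq
      rw [Nat.sub_self]
      simp only [Gen_zero_fst, hb₁, hb₂, my_mul_zero_r hdistr]
    · rw [hh e hlt, Gen_zero_fst, Gen_zero_fst, hb (D - e) (by omega)]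
  | succ j ih =>
    intro D hh hb
    rw [Gen_succ_fst, Gen_succ_fst]
    refine Finset.sum_congr rfl fun e he => ?_
    rw [Finset.mem_Icc] at he
    rcases eq_or_lt_of_le he.2 with heq | hlt
    · subst heq
      rw [Nat.sub_self, Gen_pos_snd_zero mul h₁ b₁ (j + 1) (by omega),
        Gen_pos_snd_zero mul h₂ b₂ (j + 1) (by omega), my_mul_zero_r hdistr,
        my_mul_zero_r hdistr]
    · rw [hh e hlt, ih (D - e) (fun i hi => hh i (by omega)) (fun i hi => hb i (by omega))]

/-- One step of the recursion computing the coefficients of `Ω(p t x)`. -/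
def stepH (p : ℕ) (mul : A → A → A) (u : ℕ → ℕ) (x : A) (g : ℕ → A) : ℕ → A
  | 0 => 0
  | 1 => x
  | D + 2 => -∑ k ∈ Finset.Icc 2 (p - 1), u k • Gen mul g g (k - 1) (D + 2)

lemma stepH_zero (p : ℕ) (mul : A → A → A) (u : ℕ → ℕ) (x : A) (g : ℕ → A) :
    stepH p mul u x g 0 = 0 := rfl

lemma stepH_one (p : ℕ) (mul : A → A → A) (u : ℕ → ℕ) (x : A) (g : ℕ → A) :
    stepH p mul u x g 1 = x := rfl

lemma stepH_congr {mul : A → A → A} (hdistr : ∀ x y z : A, mul x (y + z) = mul x y + mul x z)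
    (p : ℕ) (u : ℕ → ℕ) (x : A) (g₁ g₂ : ℕ → A) (hg₁ : g₁ 0 = 0) (hg₂ : g₂ 0 = 0) (D : ℕ)
    (hagree : ∀ i, i < D → g₁ i = g₂ i) :
    stepH p mul u x g₁ D = stepH p mul u x g₂ D := by
  match D with
  | 0 => rfl
  | 1 => rfl
  | D + 2 =>
    show -∑ k ∈ Finset.Icc 2 (p - 1), _ = -∑ k ∈ Finset.Icc 2 (p - 1), _
    congr 1
    refine Finset.sum_congr rfl fun k hk => ?_
    rw [Finset.mem_Icc] at hk
    obtain ⟨k', hk'⟩ : ∃ k', k - 1 = k' + 1 := ⟨k - 2, by omega⟩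
    rw [hk', Gen_congr hdistr g₁ g₂ g₁ g₂ hg₁ hg₂ k' (D + 2) hagree hagree]

/-- The coefficient family `h` for `Ω(p t x)`: `h 1 = x` and for `2 ≤ D`,
`h D = -∑_{k=2}^{p-1} u k • (coefficient of degree D in the k-fold products)`. -/
def hfun (p : ℕ) (mul : A → A → A) (u : ℕ → ℕ) (x : A) : ℕ → A :=
  stepH p mul u x ((stepH p mul u x)^[p + 1] (fun _ => 0))

lemma hfun_zero (p : ℕ) (mul : A → A → A) (u : ℕ → ℕ) (x : A) : hfun p mul u x 0 = 0 := rfl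

lemma hfun_one (p : ℕ) (mul : A → A → A) (u : ℕ → ℕ) (x : A) : hfun p mul u x 1 = x := rfl

lemma stepH_iter_zero (p : ℕ) (mul : A → A → A) (u : ℕ → ℕ) (x : A) (g : ℕ → A) (j : ℕ)
    (hj : 1 ≤ j) : (stepH p mul u x)^[j] g 0 = 0 := by
  obtain ⟨j', rfl⟩ := Nat.exists_eq_add_of_le hj
  rw [add_comm, Function.iterate_succ_apply']
  rfl

lemma stepH_iter_congr {mul : A → A → A}
    (hdistr : ∀ x y z : A, mul x (y + z) = mul x y + mul x z)
    (p : ℕ) (u : ℕ → ℕ) (x : A) :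
    ∀ (j : ℕ) (g₁ g₂ : ℕ → A) (D : ℕ), D < j →
      (stepH p mul u x)^[j] g₁ D = (stepH p mul u x)^[j] g₂ D := by
  intro j
  induction j with
  | zero => intro g₁ g₂ D hD; omega
  | succ j ih =>
    intro g₁ g₂ D hD
    rw [Function.iterate_succ_apply', Function.iterate_succ_apply']
    match j, D with
    | 0, 0 => rfl
    | j + 1, D =>
      refine stepH_congr hdistr p u x _ _ (stepH_iter_zero p mul u x g₁ (j + 1) (by omega))
        (stepH_iter_zero p mul u x g₂ (j + 1) (by omega)) D fun i hi => ih g₁ g₂ i (by omega)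

lemma hfun_spec {mul : A → A → A} (hdistr : ∀ x y z : A, mul x (y + z) = mul x y + mul x z)
    (p : ℕ) (u : ℕ → ℕ) (x : A) (D : ℕ) (hD2 : 2 ≤ D) (hDp : D ≤ p) :
    hfun p mul u x D =
      -∑ k ∈ Finset.Icc 2 (p - 1), u k • Gen mul (hfun p mul u x) (hfun p mul u x) (k - 1) D := by
  have hG0 : ((stepH p mul u x)^[p + 1] (fun _ => 0) : ℕ → A) 0 = 0 :=
    stepH_iter_zero p mul u x _ (p + 1) (by omega)
  have h1 : hfun p mul u x = (stepH p mul u x)^[p + 1] (stepH p mul u x fun _ => 0) := by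
    show stepH p mul u x ((stepH p mul u x)^[p + 1] fun _ => 0) = _
    rw [← Function.iterate_succ_apply (stepH p mul u x) (p + 1) (fun _ => 0),
      Function.iterate_succ_apply' (stepH p mul u x) (p + 1) (fun _ => 0)]
  have hGi : ∀ i, i < p + 1 →
      ((stepH p mul u x)^[p + 1] (fun _ => 0) : ℕ → A) i = hfun p mul u x i := by
    intro i hi
    rw [h1]
    exact stepH_iter_congr hdistr p u x (p + 1) _ _ i hi
  have key : hfun p mul u x D = stepH p mul u x (hfun p mul u x) D :=
    stepH_congr hdistr p u x _ _ hG0 (hfun_zero p mul u x) D fun i hi => hGi i (by omega)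
  rw [key]
  obtain ⟨D', rfl⟩ : ∃ D', D = D' + 2 := ⟨D - 2, by omega⟩
  rfl

lemma expand_iter {mul : A → A → A}
    (hdistl : ∀ x y z : A, mul (x + y) z = mul x z + mul y z)
    (hdistr : ∀ x y z : A, mul x (y + z) = mul x y + mul x z)
    (p s : ℕ) (hs : ∀ (D : ℕ) (z : A), p ≤ D → s ^ D • z = 0)
    (h : ℕ → A) (hh0 : h 0 = 0) (b : ℕ → A) (k : ℕ) :
    (fun z => mul (∑ d ∈ Finset.range p, s ^ d • h d) z)^[k] (∑ D ∈ Finset.range p, s ^ D • b D)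
      = ∑ D ∈ Finset.range p, s ^ D • Gen mul h b k D := by
  induction k with
  | zero => simp
  | succ k ih =>
    rw [Function.iterate_succ_apply', ih]
    have lhs1 : mul (∑ d ∈ Finset.range p, s ^ d • h d)
        (∑ D ∈ Finset.range p, s ^ D • Gen mul h b k D)
        = ∑ q ∈ Finset.range p ×ˢ Finset.range p,
            s ^ (q.1 + q.2) • mul (h q.1) (Gen mul h b k q.2) := by
      rw [my_mul_sum_l hdistl]
      rw [Finset.sum_product]
      refine Finset.sum_congr rfl fun d _ => ?_
      rw [my_mul_nsmul_l hdistl, my_mul_sum_r hdistr, Finset.smul_sum]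
      refine Finset.sum_congr rfl fun D _ => ?_
      rw [my_mul_nsmul_r hdistr, smul_smul, ← pow_add]
    rw [lhs1]
    have rhs1 : ∑ D ∈ Finset.range p, s ^ D • Gen mul h b (k + 1) D
        = ∑ q ∈ (Finset.range p).sigma (fun D => Finset.Icc 1 D),
            s ^ q.1 • mul (h q.2) (Gen mul h b k (q.1 - q.2)) := by
      rw [Finset.sum_sigma]
      refine Finset.sum_congr rfl fun D _ => ?_
      rw [Gen_succ_fst, Finset.smul_sum]
    rw [rhs1]
    rw [← Finset.sum_filter_add_sum_filter_not (Finset.range p ×ˢ Finset.range p)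
      (fun q => q.1 + q.2 < p ∧ 1 ≤ q.1)]
    have hzero : ∑ q ∈ (Finset.range p ×ˢ Finset.range p).filter
        (fun q => ¬(q.1 + q.2 < p ∧ 1 ≤ q.1)),
        s ^ (q.1 + q.2) • mul (h q.1) (Gen mul h b k q.2) = 0 := by
      refine Finset.sum_eq_zero fun q hq => ?_
      rw [Finset.mem_filter] at hq
      rcases Decidable.or_iff_not_imp_left.mpr (fun hlt : ¬ (p ≤ q.1 + q.2) =>
        (by omega : q.1 = 0)) with hge | h0
      · exact hs _ _ hge
      · rw [h0, hh0, my_mul_zero_l hdistl, smul_zero]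
    rw [hzero, add_zero]
    refine Finset.sum_nbij' (fun q => ⟨q.1 + q.2, q.1⟩)
      (fun q => (q.2, q.1 - q.2)) ?_ ?_ ?_ ?_ ?_
    · intro a ha
      simp only [Finset.mem_filter, Finset.mem_product, Finset.mem_range] at ha
      simp only [Finset.mem_sigma, Finset.mem_range, Finset.mem_Icc]
      omega
    · intro a ha
      simp only [Finset.mem_sigma, Finset.mem_range, Finset.mem_Icc] at ha
      simp only [Finset.mem_filter, Finset.mem_product, Finset.mem_range]
      omega
    · intro a ha
      simp only [Finset.mem_filter, Finset.mem_product, Finset.mem_range] at ha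
      simp only [Nat.add_sub_cancel_left]
    · intro a ha
      rcases a with ⟨f, e⟩
      simp only [Finset.mem_sigma, Finset.mem_range, Finset.mem_Icc] at ha
      have he : e + (f - e) = f := by omega
      simp [he]
    · intro a ha
      simp only [Finset.mem_filter, Finset.mem_product, Finset.mem_range] at ha
      simp only [Nat.add_sub_cancel_left]

/-- Facts about `ξ = γ^(p^(p-1))` for a primitive root `γ` modulo `p^p`. -/
lemma xi_facts (p : ℕ) (hp : p.Prime) (h3 : 3 ≤ p) (γ : ℕ)
    (hγ : ∀ u : (ZMod (p ^ p))ˣ, ∃ k : ℕ, (γ : ZMod (p ^ p)) ^ k = (u : ZMod (p ^ p))) :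
    ((p : ℤ) ^ p ∣ ((γ ^ p ^ (p - 1) : ℕ) : ℤ) ^ (p - 1) - 1) ∧
      (∀ j, 1 ≤ j → j < p - 1 → ¬ ((p : ℤ) ∣ ((γ ^ p ^ (p - 1) : ℕ) : ℤ) ^ j - 1)) := by
  haveI : Fact p.Prime := ⟨hp⟩
  have hpp : p ^ p ≠ 0 := pow_ne_zero _ hp.pos.ne'
  haveI : NeZero (p ^ p) := ⟨hpp⟩
  have h2pp : 2 < p ^ p := lt_of_lt_of_le (by omega) (Nat.le_self_pow hp.pos.ne' p)
  haveI : Fact (2 < p ^ p) := ⟨h2pp⟩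
  -- γ is a unit mod p^p
  obtain ⟨k₀, hk₀⟩ := hγ (-1)
  have hk0ne : k₀ ≠ 0 := by
    intro h
    rw [h, pow_zero] at hk₀
    rw [Units.val_neg, Units.val_one] at hk₀
    exact ZMod.neg_one_ne_one hk₀.symm
  have hunit : IsUnit ((γ : ℕ) : ZMod (p ^ p)) := by
    have : IsUnit (((γ : ℕ) : ZMod (p ^ p)) ^ k₀) := by
      rw [hk₀]; exact (Units.isUnit _)
    exact (isUnit_pow_iff hk0ne).mp this
  obtain ⟨gu, hgu⟩ := hunit
  -- order of the unit group mod p^p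
  have hcardpp : Fintype.card (ZMod (p ^ p))ˣ = p ^ (p - 1) * (p - 1) := by
    rw [ZMod.card_units_eq_totient, Nat.totient_prime_pow hp hp.pos]
  have hxi1' : (gu ^ p ^ (p - 1)) ^ (p - 1) = 1 := by
    rw [← pow_mul, ← hcardpp]
    exact pow_card_eq_one
  have hxicast : ((γ ^ p ^ (p - 1) : ℕ) : ZMod (p ^ p)) = ((gu ^ p ^ (p - 1) : (ZMod (p ^ p))ˣ) : ZMod (p ^ p)) := by
    push_cast
    rw [hgu]
  have hnat : (((γ ^ p ^ (p - 1)) ^ (p - 1) : ℕ) : ZMod (p ^ p)) = 1 := by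
    rw [Nat.cast_pow (γ ^ p ^ (p - 1)), hxicast, ← Units.val_pow_eq_pow_val, hxi1', Units.val_one]
  have fact1 : (p : ℤ) ^ p ∣ ((γ ^ p ^ (p - 1) : ℕ) : ℤ) ^ (p - 1) - 1 := by
    have h0 : ((((γ ^ p ^ (p - 1) : ℕ) : ℤ) ^ (p - 1) - 1 : ℤ) : ZMod (p ^ p)) = 0 := by
      rw [Int.cast_sub, Int.cast_pow, Int.cast_natCast, Int.cast_one, ← Nat.cast_pow, hnat,
        sub_self]
    have := (ZMod.intCast_zmod_eq_zero_iff_dvd _ _).mp h0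
    exact_mod_cast this
  refine ⟨fact1, ?_⟩
  -- now mod p
  have hdvd : p ∣ p ^ p := dvd_pow_self p hp.pos.ne'
  set gu' : (ZMod p)ˣ := ZMod.unitsMap hdvd gu with hgu'
  have hgu'val : (gu' : ZMod p) = ((γ : ℕ) : ZMod p) := by
    rw [hgu']
    show ((Units.map (ZMod.castHom hdvd (ZMod p)).toMonoidHom gu : (ZMod p)ˣ) : ZMod p) = _
    rw [Units.coe_map]
    show (ZMod.castHom hdvd (ZMod p)) (gu : ZMod (p ^ p)) = _
    rw [hgu, map_natCast]
  have hgen : ∀ v : (ZMod p)ˣ, ∃ k : ℕ, gu' ^ k = v := by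
    intro v
    obtain ⟨u', rfl⟩ := ZMod.unitsMap_surjective hdvd v
    obtain ⟨k, hk⟩ := hγ u'
    have : gu ^ k = u' := by
      ext
      rw [Units.val_pow_eq_pow_val, hgu, hk]
    rw [← this, map_pow]
    exact ⟨k, rfl⟩
  have hord : orderOf gu' = p - 1 := by
    have hmem : ∀ v : (ZMod p)ˣ, v ∈ Subgroup.zpowers gu' := by
      intro v
      obtain ⟨k, hk⟩ := hgen v
      exact ⟨(k : ℤ), by show gu' ^ (k : ℤ) = v; rw [zpow_natCast]; exact hk⟩
    rw [orderOf_eq_card_of_forall_mem_zpowers hmem, Nat.card_eq_fintype_card, ZMod.card_units]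
  intro j hj1 hj2 hdvdj
  have h0 : ((((γ ^ p ^ (p - 1) : ℕ) : ℤ) ^ j - 1 : ℤ) : ZMod p) = 0 :=
    (ZMod.intCast_zmod_eq_zero_iff_dvd _ _).mpr (by exact_mod_cast hdvdj)
  have h1 : ((γ ^ p ^ (p - 1) : ℕ) : ZMod p) ^ j = 1 := by
    have h0' : (((γ ^ p ^ (p - 1) : ℕ) : ZMod p)) ^ j - 1 = 0 := by
      calc (((γ ^ p ^ (p - 1) : ℕ) : ZMod p)) ^ j - 1
          = ((((γ ^ p ^ (p - 1) : ℕ) : ℤ) ^ j - 1 : ℤ) : ZMod p) := by push_cast; ring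
        _ = 0 := h0
    rwa [sub_eq_zero] at h0'
  have h2 : gu' ^ (p ^ (p - 1) * j) = 1 := by
    have : ((gu' ^ (p ^ (p - 1) * j) : (ZMod p)ˣ) : ZMod p) = 1 := by
      rw [Units.val_pow_eq_pow_val, hgu'val]
      rw [pow_mul]
      exact_mod_cast h1
    exact Units.val_eq_one.mp this
  have h3' : (p - 1) ∣ p ^ (p - 1) * j := by
    have := orderOf_dvd_of_pow_eq_one h2
    rwa [hord] at this
  have hco : (p - 1).Coprime (p ^ (p - 1)) := by
    apply Nat.Coprime.pow_right
    have hnd : ¬ p ∣ (p - 1) := fun hd => by have := Nat.le_of_dvd (by omega) hd; omega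
    exact ((Nat.Prime.coprime_iff_not_dvd hp).mpr hnd).symm
  have hdj := Nat.Coprime.dvd_of_dvd_mul_left hco h3'
  have := Nat.le_of_dvd (by omega) hdj
  omega

/-- The coefficient sums: `∑_i ξ^(p-1-i) ξ^(iD)` is `(p-1) mod p^n` for `D = 1` and
`0 mod p^n` for `2 ≤ D < p`. -/
lemma coeff_facts (p n : ℕ) (hp : p.Prime) (h3 : 3 ≤ p) (hnp : n ≤ p) (ξ : ℕ)
    (hξ0 : 1 ≤ ξ)
    (hξ1 : (p : ℤ) ^ p ∣ (ξ : ℤ) ^ (p - 1) - 1)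
    (hord : ∀ j, 1 ≤ j → j < p - 1 → ¬ ((p : ℤ) ∣ (ξ : ℤ) ^ j - 1)) :
    (∃ d : ℕ, ∑ i ∈ Finset.range (p - 1), ξ ^ (p - 1 - i) * (ξ ^ i) ^ 1 = (p - 1) + p ^ n * d)
    ∧ ∀ D, 2 ≤ D → D < p →
        ∃ d : ℕ, ∑ i ∈ Finset.range (p - 1), ξ ^ (p - 1 - i) * (ξ ^ i) ^ D = p ^ n * d := by
  have hpn_dvd : (p : ℤ) ^ n ∣ (p : ℤ) ^ p := pow_dvd_pow _ hnp
  have hexp : ∀ D, 1 ≤ D → ∀ i, i ∈ Finset.range (p - 1) →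
      ξ ^ (p - 1 - i) * (ξ ^ i) ^ D = ξ ^ (p - 1) * (ξ ^ (D - 1)) ^ i := by
    intro D hD i hi
    rw [Finset.mem_range] at hi
    rw [← pow_mul, ← pow_mul, ← pow_add, ← pow_add]
    congr 1
    obtain ⟨D', rfl⟩ : ∃ D', D = D' + 1 := ⟨D - 1, by omega⟩
    rw [Nat.mul_succ, Nat.add_sub_cancel, Nat.mul_comm D' i]
    omega
  constructor
  · -- D = 1
    have h1 : ∑ i ∈ Finset.range (p - 1), ξ ^ (p - 1 - i) * (ξ ^ i) ^ 1
        = ξ ^ (p - 1) * (p - 1) := by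
      rw [Finset.sum_congr rfl (hexp 1 le_rfl)]
      simp [Finset.sum_const, mul_comm]
    have hge : (p - 1) ≤ ξ ^ (p - 1) * (p - 1) :=
      le_mul_of_one_le_left (Nat.zero_le _) (Nat.one_le_iff_ne_zero.mpr (pow_ne_zero _ (by omega)))
    have hpn_dvd'' : ((p ^ n : ℕ) : ℤ) ∣ (ξ : ℤ) ^ (p - 1) - 1 := by
      push_cast
      exact dvd_trans hpn_dvd hξ1
    have hdvdZ : ((p ^ n : ℕ) : ℤ) ∣ ((ξ ^ (p - 1) * (p - 1) - (p - 1) : ℕ) : ℤ) := by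
      rw [Int.natCast_sub hge]
      have heq2 : ((ξ ^ (p - 1) * (p - 1) : ℕ) : ℤ) - ((p - 1 : ℕ) : ℤ)
          = ((ξ : ℤ) ^ (p - 1) - 1) * ((p - 1 : ℕ) : ℤ) := by push_cast; ring
      rw [heq2]
      exact hpn_dvd''.mul_right _
    obtain ⟨d, hd⟩ := Int.natCast_dvd_natCast.mp hdvdZ
    exact ⟨d, by rw [h1]; omega⟩
  · -- D ≥ 2
    intro D hD2 hDp
    have h1 : ∑ i ∈ Finset.range (p - 1), ξ ^ (p - 1 - i) * (ξ ^ i) ^ D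
        = ξ ^ (p - 1) * ∑ i ∈ Finset.range (p - 1), (ξ ^ (D - 1)) ^ i := by
      rw [Finset.sum_congr rfl (hexp D (by omega)), ← Finset.mul_sum]
    have hS : (p : ℤ) ^ p ∣ ∑ i ∈ Finset.range (p - 1), ((ξ : ℤ) ^ (D - 1)) ^ i := by
      have hgeom : (∑ i ∈ Finset.range (p - 1), ((ξ : ℤ) ^ (D - 1)) ^ i) * ((ξ : ℤ) ^ (D - 1) - 1)
          = ((ξ : ℤ) ^ (D - 1)) ^ (p - 1) - 1 := geom_sum_mul _ _
      have hdvd2 : (p : ℤ) ^ p ∣ ((ξ : ℤ) ^ (D - 1)) ^ (p - 1) - 1 := by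
        have h2 : ((ξ : ℤ) ^ (D - 1)) ^ (p - 1) - 1 = ((ξ : ℤ) ^ (p - 1)) ^ (D - 1) - 1 := by
          rw [← pow_mul, ← pow_mul, mul_comm]
        rw [h2]
        have hg2 := geom_sum_mul ((ξ : ℤ) ^ (p - 1)) (D - 1)
        have : ((ξ : ℤ) ^ (p - 1) - 1) ∣ ((ξ : ℤ) ^ (p - 1)) ^ (D - 1) - 1 :=
          ⟨∑ i ∈ Finset.range (D - 1), ((ξ : ℤ) ^ (p - 1)) ^ i, by rw [← hg2]; ring⟩
        exact hξ1.trans this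
      have hcop : IsCoprime ((p : ℤ) ^ p) ((ξ : ℤ) ^ (D - 1) - 1) := by
        apply IsCoprime.pow_left
        rw [Prime.coprime_iff_not_dvd (Nat.prime_iff_prime_int.mp hp)]
        exact hord (D - 1) (by omega) (by omega)
      exact hcop.dvd_of_dvd_mul_right (hgeom ▸ hdvd2)
    have hSn : (p : ℤ) ^ n ∣ ((∑ i ∈ Finset.range (p - 1), (ξ ^ (D - 1)) ^ i : ℕ) : ℤ) := by
      push_cast
      exact dvd_trans hpn_dvd hS
    have hSn' : (p ^ n : ℕ) ∣ ∑ i ∈ Finset.range (p - 1), (ξ ^ (D - 1)) ^ i := by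
      exact_mod_cast hSn
    obtain ⟨d, hd⟩ := hSn'
    exact ⟨ξ ^ (p - 1) * d, by rw [h1, hd]; ring⟩

section IterFacts

variable {mul : A → A → A}

lemma my_mul_sub_r (hdistr : ∀ x y z : A, mul x (y + z) = mul x y + mul x z) (a b c : A) :
    mul a (b - c) = mul a b - mul a c := map_sub (mulLH mul hdistr a) b c

lemma my_mul_sub_l (hdistl : ∀ x y z : A, mul (x + y) z = mul x z + mul y z) (a b c : A) :
    mul (a - b) c = mul a c - mul b c := map_sub (mulRH mul hdistl c) a b

lemma myiter_add (hdistr : ∀ x y z : A, mul x (y + z) = mul x y + mul x z) (c : A) (k : ℕ)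
    (a b : A) : (fun y => mul c y)^[k] (a + b)
      = (fun y => mul c y)^[k] a + (fun y => mul c y)^[k] b :=
  iterate_map_add (mulLH mul hdistr c) k a b

lemma myiter_nsmul (hdistr : ∀ x y z : A, mul x (y + z) = mul x y + mul x z) (c : A) (k q : ℕ)
    (a : A) : (fun y => mul c y)^[k] (q • a) = q • (fun y => mul c y)^[k] a :=
  iterate_map_nsmul (mulLH mul hdistr c) k a q

lemma myiter_zero (hdistr : ∀ x y z : A, mul x (y + z) = mul x y + mul x z) (c : A) (k : ℕ) :
    (fun y => mul c y)^[k] (0 : A) = 0 :=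
  iterate_map_zero (mulLH mul hdistr c) k

lemma myiter_neg (hdistr : ∀ x y z : A, mul x (y + z) = mul x y + mul x z) (c : A) (k : ℕ)
    (a : A) : (fun y => mul c y)^[k] (-a) = -(fun y => mul c y)^[k] a :=
  iterate_map_neg (mulLH mul hdistr c) k a

end IterFacts

/-- Swapping a double sum of scalar multiples. -/
lemma swap_sum {B : Type*} [AddCommGroup B] (u : ℕ → ℕ) (s p : ℕ) (F : ℕ → ℕ → B) :
    ∑ k ∈ Finset.Icc 1 (p - 1), u k • ∑ D ∈ Finset.range p, s ^ D • F k D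
      = ∑ D ∈ Finset.range p, s ^ D • ∑ k ∈ Finset.Icc 1 (p - 1), u k • F k D := by
  calc ∑ k ∈ Finset.Icc 1 (p - 1), u k • ∑ D ∈ Finset.range p, s ^ D • F k D
      = ∑ k ∈ Finset.Icc 1 (p - 1), ∑ D ∈ Finset.range p, u k • s ^ D • F k D :=
        Finset.sum_congr rfl fun k _ => Finset.smul_sum
    _ = ∑ D ∈ Finset.range p, ∑ k ∈ Finset.Icc 1 (p - 1), u k • s ^ D • F k D :=
        Finset.sum_comm
    _ = ∑ D ∈ Finset.range p, s ^ D • ∑ k ∈ Finset.Icc 1 (p - 1), u k • F k D := by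
        refine Finset.sum_congr rfl fun D _ => ?_
        rw [Finset.smul_sum]
        refine Finset.sum_congr rfl fun k _ => ?_
        rw [smul_smul, smul_smul, Nat.mul_comm]

/-- The coefficient family for the expansion of `(p t x) * y`. -/
def rrD (mul : A → A → A) (u : ℕ → ℕ) (p : ℕ) (h : ℕ → A) (y : A) (D : ℕ) : A :=
  ∑ k ∈ Finset.Icc 1 (p - 1), u k • Gen mul h (fun e => if e = 0 then y else 0) k D

lemma rrD_def (mul : A → A → A) (u : ℕ → ℕ) (p : ℕ) (h : ℕ → A) (y : A) (D : ℕ) :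
    rrD mul u p h y D
      = ∑ k ∈ Finset.Icc 1 (p - 1), u k • Gen mul h (fun e => if e = 0 then y else 0) k D := rfl

end Stmt11Aux

/-- if `(A,+,mul)` is a left nilpotent pre-Lie ring of cardinality `p^n`
(`n < p−1`) and `(A,+,∘)` is its group of flows, then the operation `•` on `A/ann(p²)`
constructed from this brace via `⊙` and `ξ = γ^(p^(p−1))` satisfies
`[x]•[y] = (p−1)·[x·y]`. -/
theorem stmt_11 (p n : ℕ) (hp : p.Prime) (hn : n < p - 1)
    (A : Type u) [AddCommGroup A] (hcard : Nat.card A = p ^ n)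
    (mul : A → A → A)
    -- mul is a pre-Lie ring multiplication
    (hdistl : ∀ x y z : A, mul (x + y) z = mul x z + mul y z)
    (hdistr : ∀ x y z : A, mul x (y + z) = mul x y + mul x z)
    (hpre : ∀ x y z : A,
      mul (mul x y) z - mul x (mul y z) = mul (mul y x) z - mul y (mul x z))
    -- mul is left nilpotent
    (hnil : ∃ m : ℕ, ∀ (l : List A) (b : A), l.length = m → leftProd mul l b = 0)
    -- (A,+,∘) is the group of flows of mul
    (B : LeftBrace A) (Ω : A → A) (invf : ℕ → A → A)
    (hinvf : ∀ k : ℕ, k < p → ∀ x : A, (Nat.factorial k) • invf k x = x)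
    (hΩ : ∀ a : A,
      ∑ k ∈ Finset.Icc 1 (p - 1), invf k ((fun y => mul (Ω a) y)^[k - 1] (Ω a)) = a)
    (hcirc : ∀ a b : A, B.circ a b =
      a + b + ∑ k ∈ Finset.Icc 1 (p - 1), invf k ((fun y => mul (Ω a) y)^[k] b))
    -- the operations ⊙ and • constructed from the brace B
    (γ : ℕ)
    (hγ : ∀ u : (ZMod (p ^ p))ˣ, ∃ k : ℕ, (γ : ZMod (p ^ p)) ^ k = (u : ZMod (p ^ p)))
    (odot bullet :
      (A ⧸ annSub A (p ^ 2)) → (A ⧸ annSub A (p ^ 2)) → (A ⧸ annSub A (p ^ 2)))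
    (hodot : ∀ a b c : A, p • c = B.star (p • a) b →
      odot (qmk (p ^ 2) a) (qmk (p ^ 2) b) = qmk (p ^ 2) c)
    (hbull : ∀ x y : A, bullet (qmk (p ^ 2) x) (qmk (p ^ 2) y) =
      ∑ i ∈ Finset.range (p - 1), (γ ^ (p ^ (p - 1))) ^ (p - 1 - i) •
        odot (qmk (p ^ 2) ((γ ^ (p ^ (p - 1))) ^ i • x)) (qmk (p ^ 2) y)) :
    ∀ x y : A,
      bullet (qmk (p ^ 2) x) (qmk (p ^ 2) y) = (p - 1) • qmk (p ^ 2) (mul x y) := by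
  intro x y
  -- trivial case n = 0
  rcases Nat.eq_zero_or_pos n with hn0 | hn1
  · subst hn0
    rw [pow_zero] at hcard
    have hA : Subsingleton A := (Nat.card_eq_one_iff_unique.mp hcard).1
    have hq : ∀ q q' : A ⧸ annSub A (p ^ 2), q = q' := by
      intro q q'
      induction q using QuotientAddGroup.induction_on with | H a =>
      induction q' using QuotientAddGroup.induction_on with | H b =>
      rw [Subsingleton.elim a b]
    exact hq _ _
  have hp3 : 3 ≤ p := by omega
  have expA : ∀ a : A, p ^ n • a = 0 := by
    intro a; rw [← hcard]; exact card_nsmul_eq_zero'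
  obtain ⟨m, hm⟩ := hnil
  -- the inverses of factorials mod p^n
  have hexu : ∀ k : ℕ, ∃ v : ℕ, k < p → (k.factorial * v) % p ^ n = 1 := by
    intro k
    by_cases hk : k < p
    · have hco : (k.factorial).Coprime (p ^ n) := by
        apply Nat.Coprime.pow_right
        have hnd : ¬ p ∣ k.factorial := by
          intro hd
          have := (Nat.Prime.dvd_factorial hp).mp hd
          omega
        exact ((Nat.Prime.coprime_iff_not_dvd hp).mpr hnd).symm
      obtain ⟨v, -, hv⟩ := Nat.exists_mul_mod_eq_one_of_coprime hco
        (Nat.one_lt_pow (by omega) (by omega))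
      exact ⟨v, fun _ => hv⟩
    · exact ⟨0, fun h => absurd h hk⟩
  choose u hu using hexu
  have hu' : ∀ k, k < p → ∀ z : A, (k.factorial * u k) • z = z := by
    intro k hk z
    have h1 := hu k hk
    have h2 : k.factorial * u k = p ^ n * (k.factorial * u k / p ^ n) + 1 := by
      have := Nat.div_add_mod (k.factorial * u k) (p ^ n); omega
    rw [h2, add_smul, one_smul, mul_smul, expA, zero_add]
  have invf_eq : ∀ k, 1 ≤ k → k < p → ∀ z : A, invf k z = u k • z := by
    intro k hk1 hkp z
    have h1 := hinvf k hkp z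
    calc invf k z = (k.factorial * u k) • invf k z := (hu' k hkp _).symm
      _ = (u k * k.factorial) • invf k z := by rw [Nat.mul_comm]
      _ = u k • (k.factorial • invf k z) := by rw [mul_smul]
      _ = u k • z := by rw [h1]
  have hu1 : ∀ z : A, u 1 • z = z := by
    intro z
    have := hu' 1 (by omega) z
    rwa [Nat.factorial_one, one_mul] at this
  have hIccsplit : Finset.Icc 1 (p - 1) = insert 1 (Finset.Icc 2 (p - 1)) := by
    ext k; simp only [Finset.mem_Icc, Finset.mem_insert]; omega
  have h1notin : (1 : ℕ) ∉ Finset.Icc 2 (p - 1) := by simp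
  have h1mem : (1 : ℕ) ∈ Finset.Icc 1 (p - 1) := by
    rw [Finset.mem_Icc]; omega
  -- the fixed point equation satisfied by Ω
  have hfix : ∀ a : A, Ω a
      + ∑ k ∈ Finset.Icc 2 (p - 1), u k • (fun y => mul (Ω a) y)^[k - 1] (Ω a) = a := by
    intro a
    have h0 := hΩ a
    rw [hIccsplit, Finset.sum_insert h1notin] at h0
    have e1 : invf 1 ((fun y => mul (Ω a) y)^[1 - 1] (Ω a)) = Ω a := by
      have := hinvf 1 (by omega) ((fun y => mul (Ω a) y)^[1 - 1] (Ω a))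
      rw [Nat.factorial_one, one_smul] at this
      rw [this]
      simp
    have e2 : ∑ k ∈ Finset.Icc 2 (p - 1), invf k ((fun y => mul (Ω a) y)^[k - 1] (Ω a))
        = ∑ k ∈ Finset.Icc 2 (p - 1), u k • (fun y => mul (Ω a) y)^[k - 1] (Ω a) := by
      refine Finset.sum_congr rfl fun k hk => ?_
      rw [Finset.mem_Icc] at hk
      exact invf_eq k (by omega) (by omega) _
    rw [e1, e2] at h0
    exact h0
  -- Ω of an element of pA lies in pA
  have OmegaPA : ∀ z : A, ∃ w₀ : A, Ω (p • z) = p • w₀ := by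
    intro z
    set w := Ω (p • z) with hw
    have hfx : w = p • z
        - ∑ k ∈ Finset.Icc 2 (p - 1), u k • (fun y => mul w y)^[k - 1] w :=
      eq_sub_of_add_eq (hfix (p • z))
    have iterRep : ∀ (q : ℕ) (z' : A),
        (fun y => mul w y)^[q] z' = leftProd mul (List.replicate q w) z' := by
      intro q
      induction q with
      | zero => intro z'; rfl
      | succ q ih =>
        intro z'
        rw [Function.iterate_succ_apply', List.replicate_succ]
        show mul w ((fun y => mul w y)^[q] z') = mul w (leftProd mul (List.replicate q w) z')
        rw [ih]
    have main : ∀ j : ℕ, w ∈ (nsmulH p : A →+ A).range ⊔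
        AddSubgroup.closure {v : A | ∃ i : ℕ, j ≤ i + 1 ∧ v = (fun y => mul w y)^[i] w} := by
      intro j
      induction j with
      | zero =>
        apply AddSubgroup.mem_sup_right
        apply AddSubgroup.subset_closure
        exact ⟨0, by omega, rfl⟩
      | succ j ih =>
        obtain ⟨yy, hyy, vv, hvv, hsum⟩ := AddSubgroup.mem_sup.mp ih
        obtain ⟨y₀, hy₀⟩ := AddMonoidHom.mem_range.mp hyy
        have hterm : ∀ k, 2 ≤ k →
            (fun y => mul w y)^[k - 1] w ∈ (nsmulH p : A →+ A).range ⊔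
              AddSubgroup.closure
                {v : A | ∃ i : ℕ, j + 1 ≤ i + 1 ∧ v = (fun y => mul w y)^[i] w} := by
          intro k hk
          have hsplit : (fun y => mul w y)^[k - 1] w
              = (fun y => mul w y)^[k - 1] yy + (fun y => mul w y)^[k - 1] vv := by
            rw [← myiter_add hdistr w (k - 1) yy vv]
            exact congrArg _ hsum.symm
          rw [hsplit]
          refine AddSubgroup.add_mem _ ?_ ?_
          · apply AddSubgroup.mem_sup_left
            rw [AddMonoidHom.mem_range]
            refine ⟨(fun y => mul w y)^[k - 1] y₀, ?_⟩
            rw [← hy₀]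
            show p • (fun y => mul w y)^[k - 1] y₀ = (fun y => mul w y)^[k - 1] (p • y₀)
            rw [myiter_nsmul hdistr]
          · apply AddSubgroup.mem_sup_right
            have hind : ∀ v : A, v ∈ AddSubgroup.closure
                {v : A | ∃ i : ℕ, j ≤ i + 1 ∧ v = (fun y => mul w y)^[i] w} →
                (fun y => mul w y)^[k - 1] v ∈ AddSubgroup.closure
                  {v : A | ∃ i : ℕ, j + 1 ≤ i + 1 ∧ v = (fun y => mul w y)^[i] w} := by
              intro v hv
              induction hv using AddSubgroup.closure_induction with
              | mem v hv' =>
                obtain ⟨i, hi, rfl⟩ := hv'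
                apply AddSubgroup.subset_closure
                refine ⟨k - 1 + i, by omega, ?_⟩
                rw [Function.iterate_add_apply]
              | zero =>
                rw [myiter_zero hdistr]
                exact AddSubgroup.zero_mem _
              | add a b _ _ ha hb =>
                rw [myiter_add hdistr]
                exact AddSubgroup.add_mem _ ha hb
              | neg a _ ha =>
                rw [myiter_neg hdistr]
                exact AddSubgroup.neg_mem _ ha
            exact hind vv hvv
        have hgoal : p • z - ∑ k ∈ Finset.Icc 2 (p - 1), u k • (fun y => mul w y)^[k - 1] w
            ∈ (nsmulH p : A →+ A).range ⊔ AddSubgroup.closure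
              {v : A | ∃ i : ℕ, j + 1 ≤ i + 1 ∧ v = (fun y => mul w y)^[i] w} := by
          refine AddSubgroup.sub_mem _ ?_ ?_
          · exact AddSubgroup.mem_sup_left ⟨z, rfl⟩
          · refine AddSubgroup.sum_mem _ fun k hk => ?_
            rw [Finset.mem_Icc] at hk
            exact AddSubgroup.nsmul_mem _ (hterm k hk.1) _
        rw [← hfx] at hgoal
        exact hgoal
    have hbot : AddSubgroup.closure
        {v : A | ∃ i : ℕ, m + 1 ≤ i + 1 ∧ v = (fun y => mul w y)^[i] w} ≤ ⊥ := by
      rw [AddSubgroup.closure_le]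
      rintro v ⟨i, hi, rfl⟩
      have h1 : (fun y => mul w y)^[i] w
          = (fun y => mul w y)^[m] ((fun y => mul w y)^[i - m] w) := by
        rw [← Function.iterate_add_apply]
        congr 1
        omega
      rw [SetLike.mem_coe, AddSubgroup.mem_bot, h1, iterRep]
      exact hm (List.replicate m w) _ List.length_replicate
    have hfin := main (m + 1)
    have hle : (nsmulH p : A →+ A).range ⊔ AddSubgroup.closure
        {v : A | ∃ i : ℕ, m + 1 ≤ i + 1 ∧ v = (fun y => mul w y)^[i] w}
        ≤ (nsmulH p : A →+ A).range := sup_le le_rfl (hbot.trans bot_le)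
    obtain ⟨w₀, hw₀⟩ := AddMonoidHom.mem_range.mp (hle hfin)
    exact ⟨w₀, hw₀.symm⟩
  -- injectivity of W on pA
  have iterP : ∀ (z : A) (i : ℕ), ∃ g : A,
      (fun y => mul (p • z) y)^[i] (p • z) = p ^ (i + 1) • g := by
    intro z i
    induction i with
    | zero => exact ⟨z, by simp⟩
    | succ i ih =>
      obtain ⟨g, hg⟩ := ih
      refine ⟨mul z g, ?_⟩
      rw [Function.iterate_succ_apply', hg, my_mul_nsmul_r hdistr, my_mul_nsmul_l hdistl,
        smul_smul, ← pow_succ]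
  have Winj : ∀ c₀ c₀' : A,
      p • c₀ + ∑ k ∈ Finset.Icc 2 (p - 1), u k • (fun y => mul (p • c₀) y)^[k - 1] (p • c₀)
        = p • c₀' + ∑ k ∈ Finset.Icc 2 (p - 1), u k • (fun y => mul (p • c₀') y)^[k - 1] (p • c₀')
      → p • c₀ = p • c₀' := by
    intro c₀ c₀' heq
    have diff : ∀ j : ℕ, (∃ e, p • c₀ - p • c₀' = p ^ j • e) → ∀ i : ℕ, ∃ f,
        (fun y => mul (p • c₀) y)^[i] (p • c₀) - (fun y => mul (p • c₀') y)^[i] (p • c₀')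
          = p ^ (j + i) • f := by
      rintro j ⟨e, he⟩ i
      induction i with
      | zero => exact ⟨e, by simpa using he⟩
      | succ i ih =>
        obtain ⟨f, hf⟩ := ih
        obtain ⟨g, hg⟩ := iterP c₀' i
        refine ⟨mul c₀ f + mul e g, ?_⟩
        rw [Function.iterate_succ_apply', Function.iterate_succ_apply']
        have key2 : mul (p • c₀) ((fun y => mul (p • c₀) y)^[i] (p • c₀))
            - mul (p • c₀') ((fun y => mul (p • c₀') y)^[i] (p • c₀'))
            = mul (p • c₀) ((fun y => mul (p • c₀) y)^[i] (p • c₀)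
                - (fun y => mul (p • c₀') y)^[i] (p • c₀'))
              + mul (p • c₀ - p • c₀') ((fun y => mul (p • c₀') y)^[i] (p • c₀')) := by
          rw [my_mul_sub_r hdistr, my_mul_sub_l hdistl]
          abel
        rw [key2, hf, he, hg]
        have e1 : p ^ (j + i) * p = p ^ (j + (i + 1)) := by
          rw [← pow_succ, Nat.add_assoc]
        have e2 : p ^ j * p ^ (i + 1) = p ^ (j + (i + 1)) := by rw [← pow_add]
        calc mul (p • c₀) (p ^ (j + i) • f) + mul (p ^ j • e) (p ^ (i + 1) • g)
            = p ^ (j + i) • (p • mul c₀ f) + p ^ j • (p ^ (i + 1) • mul e g) := by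
              rw [my_mul_nsmul_r hdistr (p • c₀) (p ^ (j + i)) f,
                my_mul_nsmul_l hdistl c₀ p f,
                my_mul_nsmul_l hdistl e (p ^ j) (p ^ (i + 1) • g),
                my_mul_nsmul_r hdistr e (p ^ (i + 1)) g]
          _ = (p ^ (j + i) * p) • mul c₀ f + (p ^ j * p ^ (i + 1)) • mul e g := by
              rw [smul_smul, smul_smul]
          _ = p ^ (j + (i + 1)) • (mul c₀ f + mul e g) := by
              rw [e1, e2, smul_add]
    have dstep : ∀ j : ℕ, (∃ e, p • c₀ - p • c₀' = p ^ j • e)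
        → ∃ e', p • c₀ - p • c₀' = p ^ (j + 1) • e' := by
      intro j hj
      have hsub : p • c₀ - p • c₀'
          = ∑ k ∈ Finset.Icc 2 (p - 1),
              (u k • (fun y => mul (p • c₀') y)^[k - 1] (p • c₀')
                - u k • (fun y => mul (p • c₀) y)^[k - 1] (p • c₀)) := by
        rw [Finset.sum_sub_distrib]
        apply sub_eq_sub_iff_add_eq_add.mpr
        exact heq.trans (add_comm _ _)
      have hmem : p • c₀ - p • c₀' ∈ (nsmulH (p ^ (j + 1)) : A →+ A).range := by
        rw [hsub]
        refine AddSubgroup.sum_mem _ fun k hk => ?_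
        rw [Finset.mem_Icc] at hk
        obtain ⟨k', rfl⟩ : ∃ k', k = k' + 2 := ⟨k - 2, by omega⟩
        rw [← smul_sub]
        obtain ⟨f, hf⟩ := diff j hj (k' + 2 - 1)
        have hf' : (fun y => mul (p • c₀') y)^[k' + 2 - 1] (p • c₀')
            - (fun y => mul (p • c₀) y)^[k' + 2 - 1] (p • c₀)
            = p ^ (j + (k' + 2 - 1)) • (-f) := by
          rw [← neg_sub ((fun y => mul (p • c₀) y)^[k' + 2 - 1] (p • c₀))
            ((fun y => mul (p • c₀') y)^[k' + 2 - 1] (p • c₀')), hf, ← smul_neg]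
        rw [hf']
        rw [AddMonoidHom.mem_range]
        refine ⟨u (k' + 2) • p ^ k' • (-f), ?_⟩
        show p ^ (j + 1) • (u (k' + 2) • p ^ k' • (-f))
            = u (k' + 2) • p ^ (j + (k' + 2 - 1)) • (-f)
        rw [smul_smul, smul_smul, smul_smul]
        congr 1
        have hpow : p ^ (j + 1) * p ^ k' = p ^ (j + (k' + 2 - 1)) := by
          rw [← pow_add]; congr 1; omega
        calc p ^ (j + 1) * u (k' + 2) * p ^ k'
            = u (k' + 2) * (p ^ (j + 1) * p ^ k') := by ring
          _ = u (k' + 2) * p ^ (j + (k' + 2 - 1)) := by rw [hpow]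
      obtain ⟨e', he'⟩ := AddMonoidHom.mem_range.mp hmem
      exact ⟨e', he'.symm⟩
    have hiter : ∀ j : ℕ, ∃ e, p • c₀ - p • c₀' = p ^ j • e := by
      intro j
      induction j with
      | zero => exact ⟨p • c₀ - p • c₀', by rw [pow_zero, one_smul]⟩
      | succ j ih => exact dstep j ih
    obtain ⟨e, he⟩ := hiter n
    have hz : p • c₀ - p • c₀' = 0 := by rw [he, expA]
    exact sub_eq_zero.mp hz
  -- coefficient family
  set h : ℕ → A := hfun p mul u x with hh_def
  have h0 : h 0 = 0 := rfl
  have h1x : h 1 = x := rfl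
  have hspec : ∀ D, 2 ≤ D → D ≤ p →
      h D = -∑ k ∈ Finset.Icc 2 (p - 1), u k • Gen mul h h (k - 1) D := fun D h2 hDp =>
    hfun_spec hdistr p u x D h2 hDp
  -- the quotient facts
  have qann : ∀ q : A ⧸ annSub A (p ^ 2), p ^ n • q = 0 := by
    intro q
    induction q using QuotientAddGroup.induction_on with | H a =>
    show p ^ n • (QuotientAddGroup.mk' (annSub A (p ^ 2))) a = 0
    rw [← map_nsmul, expA]
    exact map_zero _
  have hrr0 : rrD mul u p h y 0 = 0 := by
    refine Finset.sum_eq_zero fun k hk => ?_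
    rw [Finset.mem_Icc] at hk
    rw [Gen_pos_snd_zero mul h _ k (by omega), smul_zero]
  -- the key formula for odot
  have key : ∀ t : ℕ, odot (qmk (p ^ 2) (t • x)) (qmk (p ^ 2) y)
      = ∑ D ∈ Finset.range p, t ^ D • qmk (p ^ 2) (p ^ (D - 1) • rrD mul u p h y D) := by
    intro t
    have hs : ∀ (D : ℕ) (z : A), p ≤ D → (p * t) ^ D • z = 0 := by
      intro D z hD
      rw [mul_pow]
      have hsplit : p ^ D = p ^ n * p ^ (D - n) := by rw [← pow_add]; congr 1; omega
      rw [hsplit, mul_assoc, mul_smul, expA]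
    have hWc : ∑ k ∈ Finset.Icc 1 (p - 1),
        u k • (fun y' => mul (∑ d ∈ Finset.range p, (p * t) ^ d • h d) y')^[k - 1]
          (∑ d ∈ Finset.range p, (p * t) ^ d • h d)
        = p • (t • x) := by
      have hexp1 : ∀ k ∈ Finset.Icc 1 (p - 1),
          u k • (fun y' => mul (∑ d ∈ Finset.range p, (p * t) ^ d • h d) y')^[k - 1]
            (∑ d ∈ Finset.range p, (p * t) ^ d • h d)
          = u k • ∑ D ∈ Finset.range p, (p * t) ^ D • Gen mul h h (k - 1) D := by
        intro k _
        rw [expand_iter hdistl hdistr p (p * t) hs h h0 h (k - 1)]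
      rw [Finset.sum_congr rfl hexp1, swap_sum]
      have hinner : ∀ D ∈ Finset.range p,
          (p * t) ^ D • ∑ k ∈ Finset.Icc 1 (p - 1), u k • Gen mul h h (k - 1) D
          = (p * t) ^ D • (if D = 1 then x else 0) := by
        intro D hD
        rw [Finset.mem_range] at hD
        congr 1
        rcases eq_or_ne D 1 with rfl | hne
        · rw [if_pos rfl, hIccsplit, Finset.sum_insert h1notin]
          have hz : ∑ k ∈ Finset.Icc 2 (p - 1), u k • Gen mul h h (k - 1) 1 = 0 := by
            refine Finset.sum_eq_zero fun k hk => ?_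
            rw [Finset.mem_Icc] at hk
            rw [Gen_small hdistr h h0 (k - 1) 1 (by omega), smul_zero]
          rw [hz, add_zero]
          show u 1 • h 1 = x
          rw [h1x]
          exact hu1 x
        · rw [if_neg hne]
          rcases Nat.eq_zero_or_pos D with rfl | hD1
          · refine Finset.sum_eq_zero fun k hk => ?_
            rw [Gen_snd_zero mul h h h0, smul_zero]
          · have hD2 : 2 ≤ D := by omega
            rw [hIccsplit, Finset.sum_insert h1notin]
            have e0 : u 1 • Gen mul h h (1 - 1) D = h D := by
              show u 1 • h D = h D
              exact hu1 _
            rw [e0, hspec D hD2 (by omega), neg_add_cancel]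
      rw [Finset.sum_congr rfl hinner]
      rw [Finset.sum_eq_single_of_mem 1 (Finset.mem_range.mpr (by omega))]
      · rw [if_pos rfl, pow_one, mul_smul]
      · intro D _ hne
        rw [if_neg hne, smul_zero]
    have hcpA : (∑ d ∈ Finset.range p, (p * t) ^ d • h d)
        = p • ∑ d ∈ Finset.Icc 1 (p - 1), (p ^ (d - 1) * t ^ d) • h d := by
      have hrange : Finset.range p = insert 0 (Finset.Icc 1 (p - 1)) := by
        ext i; simp only [Finset.mem_range, Finset.mem_insert, Finset.mem_Icc]; omega
      rw [hrange, Finset.sum_insert (by simp), h0, smul_zero, zero_add, Finset.smul_sum]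
      refine Finset.sum_congr rfl fun d hd => ?_
      rw [Finset.mem_Icc] at hd
      rw [smul_smul]
      congr 1
      obtain ⟨d', rfl⟩ : ∃ d', d = d' + 1 := ⟨d - 1, by omega⟩
      rw [mul_pow, Nat.add_sub_cancel, pow_succ]
      ring
    have hWc' : (∑ d ∈ Finset.range p, (p * t) ^ d • h d)
        + ∑ k ∈ Finset.Icc 2 (p - 1),
            u k • (fun y' => mul (∑ d ∈ Finset.range p, (p * t) ^ d • h d) y')^[k - 1]
              (∑ d ∈ Finset.range p, (p * t) ^ d • h d)
        = p • (t • x) := by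
      rw [← hWc]
      conv_rhs => rw [hIccsplit, Finset.sum_insert h1notin]
      congr 1
      show _ = u 1 • (∑ d ∈ Finset.range p, (p * t) ^ d • h d)
      rw [hu1]
    obtain ⟨w₀, hw₀⟩ := OmegaPA (t • x)
    have hΩfix := hfix (p • (t • x))
    have hceq : (∑ d ∈ Finset.range p, (p * t) ^ d • h d) = Ω (p • (t • x)) := by
      rw [hcpA, hw₀]
      apply Winj
      rw [← hcpA, ← hw₀, hWc', hΩfix]
    have hy' : (∑ D ∈ Finset.range p, (p * t) ^ D • (fun e => if e = 0 then y else 0) D)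
        = y := by
      rw [Finset.sum_eq_single_of_mem 0 (Finset.mem_range.mpr (by omega))]
      · simp
      · intro D _ hne
        simp [hne]
    have hstar : B.star (p • (t • x)) y
        = ∑ D ∈ Finset.range p, (p * t) ^ D • rrD mul u p h y D := by
      have hstar0 : B.star (p • (t • x)) y
          = ∑ k ∈ Finset.Icc 1 (p - 1), invf k ((fun y' => mul (Ω (p • (t • x))) y')^[k] y) := by
        show B.circ (p • (t • x)) y - (p • (t • x)) - y = _
        rw [hcirc]
        abel
      rw [hstar0, ← hceq]
      have htermk : ∀ k ∈ Finset.Icc 1 (p - 1),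
          invf k ((fun y' => mul (∑ d ∈ Finset.range p, (p * t) ^ d • h d) y')^[k] y)
            = u k • ∑ D ∈ Finset.range p, (p * t) ^ D •
                Gen mul h (fun e => if e = 0 then y else 0) k D := by
        intro k hk
        rw [Finset.mem_Icc] at hk
        rw [invf_eq k (by omega) (by omega)]
        congr 1
        conv_lhs => rw [← hy']
        exact expand_iter hdistl hdistr p (p * t) hs h h0 _ k
      rw [Finset.sum_congr rfl htermk, swap_sum]
      exact Finset.sum_congr rfl fun D _ => by rw [rrD_def]
    have hstar2 : B.star (p • (t • x)) y
        = p • ∑ D ∈ Finset.range p, (p ^ (D - 1) * t ^ D) • rrD mul u p h y D := by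
      rw [hstar, Finset.smul_sum]
      refine Finset.sum_congr rfl fun D _ => ?_
      rcases Nat.eq_zero_or_pos D with rfl | hD1
      · rw [hrr0, smul_zero, smul_zero, smul_zero]
      · rw [smul_smul]
        congr 1
        obtain ⟨D', rfl⟩ : ∃ D', D = D' + 1 := ⟨D - 1, by omega⟩
        rw [mul_pow, Nat.add_sub_cancel, pow_succ]
        ring
    have hod := hodot (t • x) y _ hstar2.symm
    rw [hod]
    have hpush : qmk (p ^ 2) (∑ D ∈ Finset.range p, (p ^ (D - 1) * t ^ D) • rrD mul u p h y D)
        = ∑ D ∈ Finset.range p, t ^ D • qmk (p ^ 2) (p ^ (D - 1) • rrD mul u p h y D) := by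
      show (QuotientAddGroup.mk' (annSub A (p ^ 2)))
          (∑ D ∈ Finset.range p, (p ^ (D - 1) * t ^ D) • rrD mul u p h y D) = _
      rw [map_sum]
      refine Finset.sum_congr rfl fun D _ => ?_
      rw [show p ^ (D - 1) * t ^ D = t ^ D * p ^ (D - 1) from Nat.mul_comm _ _, mul_smul,
        map_nsmul]
      rfl
    rw [hpush]
  -- rr 1 = x·y
  have hrr1 : rrD mul u p h y 1 = mul x y := by
    rw [rrD_def]
    rw [Finset.sum_eq_single_of_mem 1 h1mem]
    · have e1 : Gen mul h (fun e => if e = 0 then y else 0) 1 1 = mul (h 1) y := by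
        rw [Gen_succ_fst, Finset.Icc_self, Finset.sum_singleton]
        rfl
      rw [e1, h1x]
      exact hu1 _
    · intro k hk hne
      rw [Finset.mem_Icc] at hk
      obtain ⟨k', rfl⟩ : ∃ k', k = k' + 1 := ⟨k - 1, by omega⟩
      rw [Gen_succ_fst, Finset.Icc_self, Finset.sum_singleton]
      rw [Gen_pos_snd_zero mul h _ k' (by omega), my_mul_zero_r hdistr, smul_zero]
  -- number theory facts
  have hxi := xi_facts p hp hp3 γ hγ
  have hξ0 : 1 ≤ γ ^ p ^ (p - 1) := by
    rcases Nat.eq_zero_or_pos (γ ^ p ^ (p - 1)) with hz | hpos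
    · exfalso
      have h1 := hxi.1
      rw [hz] at h1
      rw [Nat.cast_zero, zero_pow (by omega : p - 1 ≠ 0), zero_sub] at h1
      have h2 : ((p : ℤ) ^ p ∣ 1) := (dvd_neg).mp h1
      have h3' := Int.le_of_dvd one_pos h2
      have h4 : (3 : ℤ) ≤ (p : ℤ) := by exact_mod_cast hp3
      have h5 : (3 : ℤ) ≤ (p : ℤ) ^ p := by
        calc (3 : ℤ) ≤ (p : ℤ) := h4
          _ ≤ (p : ℤ) ^ p := le_self_pow₀ (by omega) (by omega)
      omega
    · omega
  obtain ⟨hcf1, hcf2⟩ := coeff_facts p n hp hp3 (by omega) (γ ^ p ^ (p - 1)) hξ0 hxi.1 hxi.2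
  -- final computation
  rw [hbull x y]
  have hterm2 : ∀ i ∈ Finset.range (p - 1),
      (γ ^ p ^ (p - 1)) ^ (p - 1 - i) •
        odot (qmk (p ^ 2) ((γ ^ p ^ (p - 1)) ^ i • x)) (qmk (p ^ 2) y)
      = ∑ D ∈ Finset.range p,
          ((γ ^ p ^ (p - 1)) ^ (p - 1 - i) * ((γ ^ p ^ (p - 1)) ^ i) ^ D) •
            qmk (p ^ 2) (p ^ (D - 1) • rrD mul u p h y D) := by
    intro i _
    rw [key ((γ ^ p ^ (p - 1)) ^ i), Finset.smul_sum]
    refine Finset.sum_congr rfl fun D _ => ?_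
    rw [smul_smul]
  rw [Finset.sum_congr rfl hterm2, Finset.sum_comm]
  have hfinal : ∀ D ∈ Finset.range p,
      (∑ i ∈ Finset.range (p - 1),
        ((γ ^ p ^ (p - 1)) ^ (p - 1 - i) * ((γ ^ p ^ (p - 1)) ^ i) ^ D) •
          qmk (p ^ 2) (p ^ (D - 1) • rrD mul u p h y D))
      = if D = 1 then (p - 1) • qmk (p ^ 2) (mul x y) else 0 := by
    intro D hD
    rw [Finset.mem_range] at hD
    rw [← Finset.sum_smul]
    rcases eq_or_ne D 1 with rfl | hne
    · rw [if_pos rfl]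
      obtain ⟨d1, hd1⟩ := hcf1
      rw [hd1, add_smul, mul_smul, qann, add_zero]
      congr 1
      simp only [Nat.sub_self, pow_zero, one_smul, hrr1]
    · rw [if_neg hne]
      rcases Nat.eq_zero_or_pos D with rfl | hD1
      · have hq0 : qmk (p ^ 2) (p ^ (0 - 1) • rrD mul u p h y 0) = 0 := by
          rw [hrr0, smul_zero]
          exact map_zero (QuotientAddGroup.mk' (annSub A (p ^ 2)))
        rw [hq0, smul_zero]
      · obtain ⟨d, hd⟩ := hcf2 D (by omega) hD
        rw [hd, mul_smul, qann]
  rw [Finset.sum_congr rfl hfinal]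
  rw [Finset.sum_eq_single_of_mem 1 (Finset.mem_range.mpr (by omega))]
  · rw [if_pos rfl]
  · intro D _ hne
    rw [if_neg hne]
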